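/- Fix an integer η ≥ 2 and let f : ℤ/2ηℤ → ℂ be a function on the fine grid of 2η points. Then for every integer m with −η/2 ≤ m ≤ η/2, the coarse Fourier coefficient of the restriction of the discrete second derivative satisfies (f″)‾^(m) = ψ_η(m)²·U_η(m)·(f̄)^(m), where ψ_η(m) = (η/(2π))·(1 − e^{2πim/η}) and U_η(m) = e^{−2πim/η}. -/

import Mathlib

open Real Finset

/-- The discrete derivative of a function on the fine grid of `2η` points
`x_j = −π + jπ/η`: `f′(j) = (η/(2π))·(f(j+1) − f(j−1))`, indices mod `2η`. -/
noncomputable def dderiv (η : ℕ) (f : ZMod (2 * η) → ℂ) : ZMod (2 * η) → ℂ :=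
  fun j => ((η : ℂ) / (2 * (π : ℂ))) * (f (j + 1) - f (j - 1))

/-- The restriction of `f` to the coarse grid of `η` points: `f̄(i) = f(2i)`. -/
def restr (η : ℕ) (f : ZMod (2 * η) → ℂ) : ZMod η → ℂ :=
  fun i => f ((2 * i.val : ℕ) : ZMod (2 * η))

/-- The `m`-th coarse Fourier coefficient:
`ĥ(m) = (1/η)·Σ_{i=0}^{η−1} h(i)·e^{−i m y_i}` with `y_i = −π + 2πi/η`. -/
noncomputable def coarseFourier (η : ℕ) (h : ZMod η → ℂ) (m : ℤ) : ℂ :=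
  (1 / (η : ℂ)) * ∑ i ∈ range η,
    h i * Complex.exp (-Complex.I * m * (-(π : ℂ) + 2 * π * i / η))

/-- `ψ_η(m) = (η/(2π))·(1 − e^{2πim/η})`. -/
noncomputable def psiEta (η : ℕ) (m : ℤ) : ℂ :=
  ((η : ℂ) / (2 * (π : ℂ))) * (1 - Complex.exp (2 * π * Complex.I * m / η))

/-- `U_η(m) = e^{−2πim/η}`. -/
noncomputable def UEta (η : ℕ) (m : ℤ) : ℂ :=
  Complex.exp (-(2 * π * Complex.I * m / η))

lemma sum_shift (G : ℕ → ℂ) (n : ℕ) (h : G n = G 0) :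
    ∑ i ∈ range n, G (i+1) = ∑ i ∈ range n, G i := by
  have h1 := Finset.sum_range_succ' G n
  have h2 := Finset.sum_range_succ G n
  rw [h2] at h1
  linear_combination h - h1

lemma cF_shift (η : ℕ) (hη : 0 < η) (u : ZMod η → ℂ) (m : ℤ) :
    coarseFourier η (fun i => u (i+1)) m
      = Complex.exp (2*(π:ℂ)*Complex.I*m/η) * coarseFourier η u m := by
  have hη0 : (η:ℂ) ≠ 0 := Nat.cast_ne_zero.mpr hη.ne'
  set w := Complex.exp (2*(π:ℂ)*Complex.I*m/η) with hw
  set G : ℕ → ℂ := fun n => u n * Complex.exp (-Complex.I*m*(-(π:ℂ) + 2*π*n/η)) with hG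
  have hper : G η = G 0 := by
    simp only [hG]
    have hu : ((η:ℕ) : ZMod η) = ((0:ℕ) : ZMod η) := by simp
    rw [hu]
    congr 1
    rw [show (-Complex.I*(m:ℂ)*(-(π:ℂ) + 2*π*(η:ℕ)/η)) =
        (-Complex.I*m*(-(π:ℂ) + 2*π*(0:ℕ)/η)) + (-m:ℤ)*(2*π*Complex.I) by
      push_cast; field_simp; ring]
    rw [Complex.exp_add, Complex.exp_int_mul_two_pi_mul_I, mul_one]
  have step : ∀ i ∈ range η, u ((i:ZMod η)+1) *
      Complex.exp (-Complex.I*m*(-(π:ℂ) + 2*π*i/η)) = w * G (i+1) := by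
    intro i _
    have h1 : ((i:ZMod η)+1) = (((i+1:ℕ)) : ZMod η) := by push_cast; ring
    have h2 : (-Complex.I*(m:ℂ)*(-(π:ℂ) + 2*π*(i:ℕ)/η)) =
        (2*(π:ℂ)*Complex.I*m/η) + (-Complex.I*m*(-(π:ℂ) + 2*π*((i+1:ℕ):ℂ)/η)) := by
      push_cast; field_simp; ring
    simp only [hG, h1]
    rw [h2, Complex.exp_add]
    push_cast
    ring
  unfold coarseFourier
  rw [Finset.sum_congr rfl step, ← Finset.mul_sum, sum_shift G η hper]
  simp only [hG]
  ring

lemma double_val_add_one (η : ℕ) (hη : 2 ≤ η) (i : ZMod η) :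
    ((2 * (i+1).val : ℕ) : ZMod (2*η)) = ((2 * i.val : ℕ) : ZMod (2*η)) + 2 := by
  haveI : NeZero η := ⟨by omega⟩
  haveI : Fact (1 < η) := ⟨by omega⟩
  have h1 : (i+1).val = (i.val + 1) % η := by
    rw [ZMod.val_add, ZMod.val_one]
  have h2 : (2 * ((i.val + 1) % η)) = (2*(i.val+1)) % (2*η) :=
    (Nat.mul_mod_mul_left 2 _ η).symm
  rw [h1, h2, ZMod.natCast_mod]
  push_cast; ring

lemma restr_dd2 (η : ℕ) (hη : 2 ≤ η) (f : ZMod (2*η) → ℂ) (i : ZMod η) :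
    restr η (dderiv η (dderiv η f)) i
      = ((η:ℂ)/(2*(π:ℂ)))^2 * (restr η f (i+1) - 2 * restr η f i + restr η f (i-1)) := by
  have hminus : ((2 * (i-1).val : ℕ) : ZMod (2*η)) = ((2*i.val : ℕ) : ZMod (2*η)) - 2 := by
    have h := double_val_add_one η hη (i-1)
    rw [sub_add_cancel] at h
    rw [h]; ring
  simp only [restr, dderiv, double_val_add_one η hη i, hminus]
  set j := ((2*i.val:ℕ):ZMod (2*η))
  rw [show j + 1 + 1 = j + 2 by ring, show j + 1 - 1 = j by ring,
    show j - 1 + 1 = j by ring, show j - 1 - 1 = j - 2 by ring]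
  ring

/-- For `−η/2 ≤ m ≤ η/2`, the coarse Fourier coefficient of the
restricted discrete second derivative satisfies
`(f″)‾^(m) = ψ_η(m)²·U_η(m)·(f̄)^(m)`. -/
theorem coarseFourier_dderiv2 (η : ℕ) (hη : 2 ≤ η) (f : ZMod (2 * η) → ℂ)
    (m : ℤ) (hm : -(η : ℤ) ≤ 2 * m ∧ 2 * m ≤ (η : ℤ)) :
    coarseFourier η (restr η (dderiv η (dderiv η f))) m
      = psiEta η m ^ 2 * UEta η m * coarseFourier η (restr η f) m := by
  have hη0 : 0 < η := by omega
  set c : ℂ := (η:ℂ)/(2*(π:ℂ)) with hc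
  set w := Complex.exp (2*(π:ℂ)*Complex.I*m/η) with hw
  have hw0 : w ≠ 0 := Complex.exp_ne_zero _
  set u : ZMod η → ℂ := restr η f with hu
  set F := coarseFourier η u m with hF
  have hshiftp : coarseFourier η (fun i => u (i+1)) m = w * F := cF_shift η hη0 u m
  have hshiftm : coarseFourier η (fun i => u (i-1)) m = w⁻¹ * F := by
    have h := cF_shift η hη0 (fun i => u (i-1)) m
    simp only [add_sub_cancel_right] at h
    rw [show (fun i => u i) = u from rfl] at h
    rw [← hF] at h
    field_simp [h]
    rw [h, hw]; ring
  have hfun : restr η (dderiv η (dderiv η f))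
      = fun i => c^2 * (u (i+1) - 2 * u i + u (i-1)) := by
    funext i; exact restr_dd2 η hη f i
  rw [hfun]
  have alg : ∀ (a c S1 S2 S3 : ℂ),
      (1/a) * (c^2 * S1 - c^2 * 2 * S2 + c^2 * S3)
        = c^2 * ((1/a) * S1 - 2 * ((1/a) * S2) + (1/a) * S3) := by
    intros; ring
  have lin : coarseFourier η (fun i => c^2 * (u (i+1) - 2 * u i + u (i-1))) m
      = c^2 * (coarseFourier η (fun i => u (i+1)) m - 2 * coarseFourier η u m
          + coarseFourier η (fun i => u (i-1)) m) := by
    simp only [coarseFourier]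
    have key : ∀ i ∈ range η,
        (c^2 * (u ((i:ZMod η)+1) - 2 * u i + u ((i:ZMod η)-1))) *
          Complex.exp (-Complex.I * m * (-(π:ℂ) + 2 * π * i / η))
        = c^2 * (u ((i:ZMod η)+1) * Complex.exp (-Complex.I * m * (-(π:ℂ) + 2 * π * i / η)))
          - c^2 * 2 * (u i * Complex.exp (-Complex.I * m * (-(π:ℂ) + 2 * π * i / η)))
          + c^2 * (u ((i:ZMod η)-1) * Complex.exp (-Complex.I * m * (-(π:ℂ) + 2 * π * i / η))) := by
      intro i _; ring
    rw [Finset.sum_congr rfl key, Finset.sum_add_distrib, Finset.sum_sub_distrib,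
      ← Finset.mul_sum, ← Finset.mul_sum, ← Finset.mul_sum]
    exact alg _ _ _ _ _
  rw [lin, hshiftp, hshiftm, ← hF]
  have hpsi : psiEta η m = c * (1 - w) := rfl
  have hU : UEta η m = w⁻¹ := by
    rw [UEta, Complex.exp_neg]
  rw [hpsi, hU]
  field_simp
  ring
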